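/- Let a > 0 and c be coprime integers with a > 4c and with d = a(a − 4c) not a perfect square, let n be an integer with |n| ≥ 2 and (n,a) ∉ {(2,1), (−2,1)}, and set Q = n·!![2a, a; a, 2c]. Then no automorph of Q of determinant −1 induces ±id on the discriminant group: there is no M ∈ GL₂(ℤ) with det M = −1, Mᵀ Q M = Q, and ε ∈ {1, −1} such that (M − εI)·Q⁻¹ has integer entries. -/

import Mathlib

open Matrix

/-- for the non-diagonal ambiguous form with `|n| ≥ 2` and
`(n,a) ∉ {(2,1), (-2,1)}`, no automorph of determinant `-1` induces `±id` on
the discriminant group. -/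
theorem nondiagonal_no_improper_automorph_on_discriminant
    (a c n : ℤ) (hac : Int.gcd a c = 1) (ha : 0 < a) (hc : 4 * c < a)
    (hsq : ¬ ∃ m : ℤ, m * m = a * (a - 4 * c))
    (hn : 2 ≤ |n|) (hn2 : ¬ (n = 2 ∧ a = 1)) (hn2' : ¬ (n = -2 ∧ a = 1))
    (Q : Matrix (Fin 2) (Fin 2) ℤ) (hQ : Q = n • !![2 * a, a; a, 2 * c]) :
    ¬ ∃ (M : Matrix (Fin 2) (Fin 2) ℤ) (ε : ℤ),
      M.det = -1 ∧ Mᵀ * Q * M = Q ∧ (ε = 1 ∨ ε = -1) ∧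
      ∀ i j : Fin 2, ∃ m : ℤ,
        ((M.map (Int.cast : ℤ → ℚ) - (ε : ℚ) • 1) *
          (Q.map (Int.cast : ℤ → ℚ))⁻¹) i j = (m : ℚ) := by
  subst hQ
  rintro ⟨M, ε, hdet, hauto, hεc, hint⟩
  have hn0 : n ≠ 0 := by rintro rfl; simp at hn
  have ha0 : a ≠ 0 := ha.ne'
  have hD : (0:ℤ) < a - 4*c := by linarith
  have hD0 : (a - 4*c) ≠ 0 := hD.ne'
  have he : (4*a*c - a*a) ≠ 0 := by nlinarith
  have hne : (n*(4*a*c - a*a)) ≠ 0 := mul_ne_zero hn0 he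
  have hneQ : ((n*(4*a*c - a*a) : ℤ) : ℚ) ≠ 0 := Int.cast_ne_zero.mpr hne
  have h2n0 : (2*n : ℤ) ≠ 0 := mul_ne_zero two_ne_zero hn0
  -- rational inverse of Q
  have hQmap : ((n • !![2*a, a; a, 2*c] : Matrix (Fin 2) (Fin 2) ℤ)).map
      (Int.cast : ℤ → ℚ) = (n:ℚ) • !![2*(a:ℚ), a; a, 2*c] := by
    ext i j
    fin_cases i <;> fin_cases j <;>
      simp [Matrix.map_apply] <;> push_cast <;> ring
  have hnQ : (n:ℚ) ≠ 0 := Int.cast_ne_zero.mpr hn0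
  have heQ : (4*(a:ℚ)*(c:ℚ) - (a:ℚ)*(a:ℚ)) ≠ 0 := by
    intro h
    apply he
    have : ((4*a*c - a*a : ℤ):ℚ) = 0 := by push_cast; linear_combination h
    exact_mod_cast this
  have hGC : (!![2*(a:ℚ), a; a, 2*c]) * !![2*(c:ℚ), -a; -a, 2*a]
      = (4*(a:ℚ)*(c:ℚ) - (a:ℚ)*(a:ℚ)) • 1 := by
    ext i j
    fin_cases i <;> fin_cases j <;>
      (simp [Matrix.mul_apply, Fin.sum_univ_two, Matrix.one_apply]
       ring)
  have hinv : (((n • !![2*a, a; a, 2*c] : Matrix (Fin 2) (Fin 2) ℤ)).map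
      (Int.cast : ℤ → ℚ))⁻¹ =
      ((n*(4*a*c - a*a) : ℤ) : ℚ)⁻¹ • !![2*(c:ℚ), -a; -a, 2*a] := by
    apply Matrix.inv_eq_right_inv
    rw [hQmap, Matrix.smul_mul, Matrix.mul_smul, hGC, smul_smul, smul_smul]
    have h1 : (n:ℚ) * (((n*(4*a*c - a*a) : ℤ) : ℚ))⁻¹ *
        (4*(a:ℚ)*(c:ℚ) - (a:ℚ)*(a:ℚ)) = 1 := by
      have h2 : ((n*(4*a*c - a*a) : ℤ) : ℚ)
          = (n:ℚ) * (4*(a:ℚ)*(c:ℚ) - (a:ℚ)*(a:ℚ)) := by push_cast; ring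
      rw [h2]
      field_simp
      exact div_self (sub_ne_zero.mpr (by exact_mod_cast (by omega : 4*c ≠ a)))
    rw [h1, one_smul]
  -- integrality of (M - εI) * adjugate G
  have hdiv : ∀ i j, (n*(4*a*c - a*a)) ∣
      (((M - ε • 1) * !![2*c, -a; -a, 2*a] : Matrix (Fin 2) (Fin 2) ℤ) i j) := by
    intro i j
    obtain ⟨m, hm⟩ := hint i j
    rw [hinv, Matrix.mul_smul, Matrix.smul_apply, smul_eq_mul,
      inv_mul_eq_iff_eq_mul₀ hneQ] at hm
    refine ⟨m, ?_⟩
    have : ((((M - ε • 1) * !![2*c, -a; -a, 2*a] : Matrix (Fin 2) (Fin 2) ℤ) i j : ℤ) : ℚ)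
        = ((M.map (Int.cast : ℤ → ℚ) - (ε:ℚ) • 1) * !![2*(c:ℚ), -a; -a, 2*a]) i j := by
      fin_cases i <;> fin_cases j <;>
        (simp [Matrix.mul_apply, Fin.sum_univ_two, Matrix.sub_apply,
          Matrix.smul_apply, Matrix.one_apply, Matrix.map_apply,
          ← Matrix.diagonal_intCast, Matrix.diagonal_apply]
         try push_cast
         try ring)
    rw [hm] at this
    exact_mod_cast this
  obtain ⟨p, q, r, s, hM⟩ : ∃ p q r s, M = !![p, q; r, s] :=
    ⟨M 0 0, M 0 1, M 1 0, M 1 1, Matrix.eta_fin_two M⟩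
  subst hM
  rw [Matrix.det_fin_two_of] at hdet
  -- automorph scalar equations
  have h00 := (Matrix.ext_iff.2 hauto) 0 0
  have h01 := (Matrix.ext_iff.2 hauto) 0 1
  simp [Matrix.mul_apply, Fin.sum_univ_two, Matrix.transpose_apply,
    Matrix.vecHead, Matrix.vecTail] at h00 h01
  have eqB : a*p^2 + a*p*r + c*r^2 = a := by
    refine mul_left_cancel₀ h2n0 ?_
    linear_combination h00
  have eqD3 : 2*a*p*q + a*q*r + a*p*s + 2*c*r*s = a := by
    refine mul_left_cancel₀ hn0 ?_
    linear_combination h01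
  -- trace zero: s = -p
  have hadj : (!![p, q; r, s] : Matrix (Fin 2) (Fin 2) ℤ) * (!![p, q; r, s]).adjugate
      = (-1 : ℤ) • 1 := by
    rw [Matrix.mul_adjugate, Matrix.det_fin_two_of, hdet]
  have hid : (!![p, q; r, s])ᵀ * (n • !![2*a, a; a, 2*c]) * ((-1 : ℤ) • 1)
      = (n • !![2*a, a; a, 2*c] : Matrix (Fin 2) (Fin 2) ℤ) * (!![p, q; r, s]).adjugate := by
    calc (!![p, q; r, s])ᵀ * (n • !![2*a, a; a, 2*c]) * ((-1 : ℤ) • 1)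
        = (!![p, q; r, s])ᵀ * (n • !![2*a, a; a, 2*c]) *
            ((!![p, q; r, s]) * (!![p, q; r, s]).adjugate) := by rw [hadj]
      _ = ((!![p, q; r, s])ᵀ * (n • !![2*a, a; a, 2*c]) * (!![p, q; r, s])) *
            (!![p, q; r, s]).adjugate := by simp only [← mul_assoc]
      _ = _ := by rw [hauto]
  have hE0 := (Matrix.ext_iff.2 hid) 0 0
  simp [Matrix.adjugate_fin_two, Matrix.mul_apply, Fin.sum_univ_two,
    Matrix.transpose_apply, Matrix.vecHead, Matrix.vecTail, Matrix.one_apply] at hE0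
  have hs : s = -p := by
    refine mul_left_cancel₀ (mul_ne_zero (mul_ne_zero two_ne_zero ha0) hn0) ?_
    linear_combination -hE0
  -- case p = 0
  by_cases hp0 : p = 0
  · have hqr : r * q = 1 := by linear_combination -hdet + s*hp0
    have hca : c = a := by
      rcases Int.isUnit_iff.1 (IsUnit.of_mul_eq_one (a := r) q hqr) with h | h
      · linear_combination eqB - (a*p + a*r)*hp0 - c*(r+1)*h
      · linear_combination eqB - (a*p + a*r)*hp0 - c*(r-1)*h
    linarith
  -- case p ≠ 0
  have hqr : q*r = 1 - p^2 := by linear_combination -hdet + p*hs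
  have h2p : 2*p*(a*q - a*p - c*r) = 0 := by
    linear_combination eqD3 - (a*p + 2*c*r)*hs - a*hqr
  have hkey : a*q - a*p - c*r = 0 := by
    rcases mul_eq_zero.mp h2p with h | h
    · exact absurd (by omega : p = 0) hp0
    · exact h
  have hcop : IsCoprime a c := Int.isCoprime_iff_gcd_eq_one.mpr hac
  have har : a ∣ r := by
    refine hcop.dvd_of_dvd_mul_left ⟨q - p, ?_⟩
    linear_combination -hkey
  obtain ⟨r₁, hr₁⟩ := har
  have hq : q = p + c*r₁ := by
    refine mul_left_cancel₀ ha0 ?_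
    linear_combination hkey + c*hr₁
  -- the three divisibility conditions
  have d00 := hdiv 0 0
  have d01 := hdiv 0 1
  have d11 := hdiv 1 1
  have hY00 : ((!![p, q; r, s] - ε • 1) * !![2*c, -a; -a, 2*a] : Matrix (Fin 2) (Fin 2) ℤ) 0 0
      = 2*c*(p - ε) - a*q := by
    simp [Matrix.mul_apply, Fin.sum_univ_two, Matrix.sub_apply, Matrix.smul_apply,
      Matrix.one_apply, Matrix.vecHead, Matrix.vecTail,
      ← Matrix.diagonal_intCast, Matrix.diagonal_apply]
    ring
  have hY01 : ((!![p, q; r, s] - ε • 1) * !![2*c, -a; -a, 2*a] : Matrix (Fin 2) (Fin 2) ℤ) 0 1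
      = -(a*(p - ε)) + 2*a*q := by
    simp [Matrix.mul_apply, Fin.sum_univ_two, Matrix.sub_apply, Matrix.smul_apply,
      Matrix.one_apply, Matrix.vecHead, Matrix.vecTail,
      ← Matrix.diagonal_intCast, Matrix.diagonal_apply]
    ring
  have hY11 : ((!![p, q; r, s] - ε • 1) * !![2*c, -a; -a, 2*a] : Matrix (Fin 2) (Fin 2) ℤ) 1 1
      = -(a*r) + 2*a*(s - ε) := by
    simp [Matrix.mul_apply, Fin.sum_univ_two, Matrix.sub_apply, Matrix.smul_apply,
      Matrix.one_apply, Matrix.vecHead, Matrix.vecTail,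
      ← Matrix.diagonal_intCast, Matrix.diagonal_apply]
    ring
  rw [hY00] at d00
  rw [hY01] at d01
  rw [hY11] at d11
  obtain ⟨t0, ht0⟩ := d00
  obtain ⟨t1, ht1⟩ := d01
  obtain ⟨t2, ht2⟩ := d11
  -- cancel a in d01 : 2q - p + ε = -(n*(a-4c)*t1)
  have hk : 2*q - p + ε = -(n*(a - 4*c)*t1) := by
    refine mul_left_cancel₀ ha0 ?_
    linear_combination ht1
  -- cancel a in d11 (with s = -p) : r + 2p + 2ε = n*(a-4c)*t2
  have hw : r + 2*p + 2*ε = n*(a - 4*c)*t2 := by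
    refine mul_left_cancel₀ (neg_ne_zero.mpr (mul_ne_zero two_ne_zero ha0)) ?_
    linear_combination 2*ht2 - 4*a*hs
  -- n ∣ r₁
  have hnr₁ : r₁ = n*(t2 + 2*t1) := by
    refine mul_left_cancel₀ hD0 ?_
    linear_combination hw - 2*hk + 4*hq - hr₁
  -- n ∣ c*r₁ + ε
  have hnε : c*r₁ + ε = n*(-(a*t0) - (a - 2*c)*t1) := by
    refine mul_left_cancel₀ hD0 ?_
    linear_combination ht0 + (a - 2*c)*hk - (a - 4*c)*hq
  -- hence n ∣ ε, contradiction with |n| ≥ 2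
  have hnd : n ∣ ε := ⟨-(a*t0) - (a - 2*c)*t1 - c*(t2 + 2*t1), by
    linear_combination hnε - c*hnr₁⟩
  have : n = 1 ∨ n = -1 := by
    rcases hεc with rfl | rfl
    · exact Int.isUnit_iff.1 (isUnit_of_dvd_one hnd)
    · exact Int.isUnit_iff.1 (isUnit_of_dvd_one (dvd_neg.mp hnd))
  rcases this with rfl | rfl <;> simp at hn
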